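/- The extremal function of any staircase 0-1 matrix A is linear: there exists a constant C > 0 such that ex(n, A) ≤ C·n for all positive integers n. -/

import Mathlib

set_option maxHeartbeats 1000000

/-- An edge-ordered graph: a finite simple graph together with an injective
real labeling of its edges (inducing a linear order on the edge set). -/
structure EOGraph (V : Type) [Fintype V] where
  graph : SimpleGraph V
  label : Sym2 V → ℝ
  inj : ∀ e ∈ graph.edgeSet, ∀ f ∈ graph.edgeSet, label e = label f → e = f

/-- `G` contains `H`: an injective, adjacency-preserving, edge-order-respecting map. -/
def EOContains {V W : Type} [Fintype V] [Fintype W] (G : EOGraph V) (H : EOGraph W) : Prop :=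
  ∃ f : W → V, Function.Injective f ∧
    (∀ a b, H.graph.Adj a b → G.graph.Adj (f a) (f b)) ∧
    ∀ e ∈ H.graph.edgeSet, ∀ e' ∈ H.graph.edgeSet,
      H.label e < H.label e' → G.label (Sym2.map f e) < G.label (Sym2.map f e')

/-- The Turán number `ex_<(n, H)`: the maximum number of edges of an
edge-ordered graph on `n` vertices avoiding `H`. -/
noncomputable def exLT {W : Type} [Fintype W] (n : ℕ) (H : EOGraph W) : ℕ :=
  sSup {m | ∃ G : EOGraph (Fin n), ¬ EOContains G H ∧ G.graph.edgeSet.ncard = m}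

/-- The reverse of an edge-ordered graph: same graph, reversed edge order. -/
def EOGraph.reverse {V : Type} [Fintype V] (G : EOGraph V) : EOGraph V where
  graph := G.graph
  label := fun e => - G.label e
  inj := fun e he f hf h => G.inj e he f hf (neg_inj.mp h)

/-- Two edges (as elements of `Sym2 V`) are adjacent if they share a vertex. -/
def EdgesAdjacent {V : Type} (e f : Sym2 V) : Prop := ∃ v, v ∈ e ∧ v ∈ f

/-- `e` and `f` are consecutive edges of `G`: `e < f` with no edge strictly in between. -/
def Consecutive {V : Type} [Fintype V] (G : EOGraph V) (e f : Sym2 V) : Prop :=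
  e ∈ G.graph.edgeSet ∧ f ∈ G.graph.edgeSet ∧ G.label e < G.label f ∧
    ¬ ∃ g ∈ G.graph.edgeSet, G.label e < G.label g ∧ G.label g < G.label f

/-- A semi-caterpillar: the underlying graph is a tree with at least one edge, and any
pair of consecutive edges is adjacent or directly connected by an edge larger than both. -/
def IsSemiCaterpillar {V : Type} [Fintype V] (G : EOGraph V) : Prop :=
  G.graph.IsTree ∧ G.graph.edgeSet.Nonempty ∧
  ∀ e f, Consecutive G e f →
    EdgesAdjacent e f ∨
    ∃ u v, s(u, v) ∈ G.graph.edgeSet ∧ u ∈ e ∧ v ∈ f ∧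
      G.label e < G.label s(u, v) ∧ G.label f < G.label s(u, v)

/-- The order chromatic number of `G` is at most `k`: there is a simple graph `H` with
chromatic number at most `k` all of whose edge-orderings contain `G`. -/
def OrderChromAtMost {V : Type} [Fintype V] (G : EOGraph V) (k : ℕ) : Prop :=
  ∃ (m : ℕ) (H : SimpleGraph (Fin m)), H.chromaticNumber ≤ (k : ℕ∞) ∧
    ∀ K : EOGraph (Fin m), K.graph = H → EOContains K G

/-- The order chromatic number of `G` equals 2. -/
def HasOrderChrom2 {V : Type} [Fintype V] (G : EOGraph V) : Prop :=
  OrderChromAtMost G 2 ∧ ¬ OrderChromAtMost G 1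

/-- A vertex is close if the edges incident to it form an interval in the edge order. -/
def CloseVertex {V : Type} [Fintype V] (G : EOGraph V) (v : V) : Prop :=
  ∀ e ∈ G.graph.edgeSet, ∀ f ∈ G.graph.edgeSet, ∀ g ∈ G.graph.edgeSet,
    v ∈ e → v ∈ g → G.label e ≤ G.label f → G.label f ≤ G.label g → v ∈ f

/-- An edge-ordered bigraph: an edge-ordered graph with a proper 2-coloring of the
vertices into left (`false`) and right (`true`) vertices. -/
structure EOBigraph (V : Type) [Fintype V] where
  toEOGraph : EOGraph V
  side : V → Bool
  proper : ∀ u v, toEOGraph.graph.Adj u v → side u ≠ side v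

/-- A right caterpillar: an edge-ordered bigraph whose underlying edge-ordered graph is a
semi-caterpillar and all of whose right vertices are close. -/
def IsRightCaterpillar {V : Type} [Fintype V] (B : EOBigraph V) : Prop :=
  IsSemiCaterpillar B.toEOGraph ∧ ∀ v, B.side v = true → CloseVertex B.toEOGraph v

/-- Containment of edge-ordered bigraphs: additionally sides must be preserved. -/
def BContains {V W : Type} [Fintype V] [Fintype W] (G : EOBigraph V) (H : EOBigraph W) : Prop :=
  ∃ f : W → V, Function.Injective f ∧
    (∀ a b, H.toEOGraph.graph.Adj a b → G.toEOGraph.graph.Adj (f a) (f b)) ∧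
    (∀ e ∈ H.toEOGraph.graph.edgeSet, ∀ e' ∈ H.toEOGraph.graph.edgeSet,
      H.toEOGraph.label e < H.toEOGraph.label e' →
        G.toEOGraph.label (Sym2.map f e) < G.toEOGraph.label (Sym2.map f e')) ∧
    ∀ a, G.side (f a) = H.side a

/-- Isomorphism of edge-ordered bigraphs. -/
def BIsoTo {V W : Type} [Fintype W] [Fintype V] (H : EOBigraph W) (G : EOBigraph V) : Prop :=
  ∃ f : W ≃ V, (∀ a b, H.toEOGraph.graph.Adj a b ↔ G.toEOGraph.graph.Adj (f a) (f b)) ∧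
    (∀ e ∈ H.toEOGraph.graph.edgeSet, ∀ e' ∈ H.toEOGraph.graph.edgeSet,
      (H.toEOGraph.label e < H.toEOGraph.label e' ↔
        G.toEOGraph.label (Sym2.map f e) < G.toEOGraph.label (Sym2.map f e'))) ∧
    ∀ a, G.side (f a) = H.side a

/-- Isomorphism of edge-ordered graphs. -/
def EOIsoTo {V W : Type} [Fintype W] [Fintype V] (H : EOGraph W) (G : EOGraph V) : Prop :=
  ∃ f : W ≃ V, (∀ a b, H.graph.Adj a b ↔ G.graph.Adj (f a) (f b)) ∧
    ∀ e ∈ H.graph.edgeSet, ∀ e' ∈ H.graph.edgeSet,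
      (H.label e < H.label e' ↔ G.label (Sym2.map f e) < G.label (Sym2.map f e'))

/-- The labeling of the path graph on `Fin k` in which the edge `{i, i+1}` gets label `w i`. -/
def pathLabel {k : ℕ} (w : Fin k → ℝ) : Sym2 (Fin k) → ℝ :=
  Sym2.lift ⟨fun i j => w (min i j), fun i j => by simp [min_comm]⟩

lemma pathGraph_edge_form {k : ℕ} {e : Sym2 (Fin k)}
    (he : e ∈ (SimpleGraph.pathGraph k).edgeSet) :
    ∃ i j : Fin k, e = s(i, j) ∧ (i : ℕ) + 1 = (j : ℕ) := by
  induction e using Sym2.inductionOn with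
  | hf a b =>
    rw [SimpleGraph.mem_edgeSet, SimpleGraph.pathGraph_adj] at he
    rcases he with h | h
    · exact ⟨a, b, rfl, h⟩
    · exact ⟨b, a, Sym2.eq_swap, h⟩

/-- The edge-ordered path on `k` vertices whose edge labels, listed along the path,
are `w 0, w 1, …, w (k-2)`. -/
def pathEO (k : ℕ) (w : Fin k → ℝ) (hw : Function.Injective w) : EOGraph (Fin k) where
  graph := SimpleGraph.pathGraph k
  label := pathLabel w
  inj := by
    intro e he f hf hef
    obtain ⟨i, j, rfl, hij⟩ := pathGraph_edge_form he
    obtain ⟨i', j', rfl, hij'⟩ := pathGraph_edge_form hf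
    have h1 : min i j = i := min_eq_left (Fin.le_def.mpr (by omega))
    have h2 : min i' j' = i' := min_eq_left (Fin.le_def.mpr (by omega))
    simp only [pathLabel, Sym2.lift_mk] at hef
    rw [h1, h2] at hef
    have hii : i = i' := hw hef
    have hjj : j = j' := Fin.ext (by omega)
    rw [hii, hjj]

/-- The edge-ordered path with natural-number labels. -/
def pathEON (k : ℕ) (v : Fin k → ℕ) (hv : Function.Injective v) : EOGraph (Fin k) :=
  pathEO k (fun i => (v i : ℝ)) (fun a b h => hv (Nat.cast_injective h))

/-- The bipartition of the edge-ordered path `pathEON k v hv`; the starting vertex is a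
right vertex iff `startRight` holds (right = `true`, left = `false`). -/
def pathEOBig (k : ℕ) (v : Fin k → ℕ) (hv : Function.Injective v) (startRight : Bool) :
    EOBigraph (Fin k) where
  toEOGraph := pathEON k v hv
  side := fun i => if i.val % 2 = 0 then startRight else !startRight
  proper := by
    intro a b hab
    have h : (SimpleGraph.pathGraph k).Adj a b := hab
    rw [SimpleGraph.pathGraph_adj] at h
    have hpar : (a.val % 2 = 0) ↔ ¬ (b.val % 2 = 0) := by omega
    by_cases ha : a.val % 2 = 0 <;> by_cases hb : b.val % 2 = 0 <;>
      simp_all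

def P4_213 : EOGraph (Fin 4) := pathEON 4 ![2,1,3,0] (by decide)
def P5_1342 : EOGraph (Fin 5) := pathEON 5 ![1,3,4,2,0] (by decide)
def P5_1432 : EOGraph (Fin 5) := pathEON 5 ![1,4,3,2,0] (by decide)
def P6_13254 : EOGraph (Fin 6) := pathEON 6 ![1,3,2,5,4,0] (by decide)
def P6_21354 : EOGraph (Fin 6) := pathEON 6 ![2,1,3,5,4,0] (by decide)
def P6plus_13254 : EOBigraph (Fin 6) := pathEOBig 6 ![1,3,2,5,4,0] (by decide) true
def P6minus_13254 : EOBigraph (Fin 6) := pathEOBig 6 ![1,3,2,5,4,0] (by decide) false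
def P5plus_2143 : EOBigraph (Fin 5) := pathEOBig 5 ![2,1,4,3,0] (by decide) true
def P5minus_2143 : EOBigraph (Fin 5) := pathEOBig 5 ![2,1,4,3,0] (by decide) false

/-- `B'` is an extension of `B`: it is obtained by adding new edges, each connecting an end
of the smallest edge `s(x,y)` of `B` to a new degree-1 vertex, all new edges being smaller
than `s(x,y)`, and all new edges at the left end being smaller than those at the right end. -/
def IsExtensionOf {V' V : Type} [Fintype V'] [Fintype V]
    (B' : EOBigraph V') (B : EOBigraph V) : Prop :=
  ∃ (ι : V → V') (x y : V),
    Function.Injective ι ∧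
    B.toEOGraph.graph.Adj x y ∧ B.side x = false ∧ B.side y = true ∧
    (∀ e ∈ B.toEOGraph.graph.edgeSet, B.toEOGraph.label s(x, y) ≤ B.toEOGraph.label e) ∧
    (∀ a b, B.toEOGraph.graph.Adj a b ↔ B'.toEOGraph.graph.Adj (ι a) (ι b)) ∧
    (∀ a, B'.side (ι a) = B.side a) ∧
    (∀ e ∈ B.toEOGraph.graph.edgeSet, ∀ f ∈ B.toEOGraph.graph.edgeSet,
      (B.toEOGraph.label e < B.toEOGraph.label f ↔
        B'.toEOGraph.label (Sym2.map ι e) < B'.toEOGraph.label (Sym2.map ι f))) ∧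
    (∀ w : V', w ∉ Set.range ι →
      (∃! u, B'.toEOGraph.graph.Adj w u) ∧
      (∀ u, B'.toEOGraph.graph.Adj w u → (u = ι x ∨ u = ι y) ∧
        B'.toEOGraph.label s(w, u) < B'.toEOGraph.label s(ι x, ι y))) ∧
    (∀ w w' : V', w ∉ Set.range ι → w' ∉ Set.range ι →
      B'.toEOGraph.graph.Adj w (ι x) → B'.toEOGraph.graph.Adj w' (ι y) →
      B'.toEOGraph.label s(w, ι x) < B'.toEOGraph.label s(w', ι y))

/-- A bundled edge-ordered bigraph (on some `Fin n`). -/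
structure BundledBigraph where
  n : ℕ
  big : EOBigraph (Fin n)

/-- `B` is (isomorphic to) `T₀`, the edge-ordered bigraph with one edge and two vertices. -/
def IsT0 {V : Type} [Fintype V] (B : EOBigraph V) : Prop :=
  Fintype.card V = 2 ∧ ∀ u v : V, u ≠ v → B.toEOGraph.graph.Adj u v

/-- `B` can be obtained (up to isomorphism) from `T₀` by a sequence of `i` extensions. -/
def ReachedInSteps {V : Type} [Fintype V] (i : ℕ) (B : EOBigraph V) : Prop :=
  ∃ f : ℕ → BundledBigraph, IsT0 (f 0).big ∧ BIsoTo (f i).big B ∧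
    ∀ j < i, IsExtensionOf (f (j+1)).big (f j).big

/-- The recursive depth of a right caterpillar: the minimum number of extension steps
needed to obtain it from `T₀`. -/
def HasRecursiveDepth {V : Type} [Fintype V] (B : EOBigraph V) (i : ℕ) : Prop :=
  ReachedInSteps i B ∧ ∀ j < i, ¬ ReachedInSteps j B

/-- An edge `e` (with left end `x` and right end `y`) is `c`-left-leaning: there are `c` edges
at `x` and `c` edges at `y` with every edge of the latter set larger than every edge of the
former, but smaller than `e`. -/
def LeftLeaning {V : Type} [Fintype V] (c : ℕ) (G : EOBigraph V) (e : Sym2 V) : Prop :=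
  ∃ x y : V, e = s(x, y) ∧ e ∈ G.toEOGraph.graph.edgeSet ∧
    G.side x = false ∧ G.side y = true ∧
    ∃ S S' : Finset (Sym2 V), S.card = c ∧ S'.card = c ∧
      (∀ f ∈ S, f ∈ G.toEOGraph.graph.edgeSet ∧ x ∈ f) ∧
      (∀ f ∈ S', f ∈ G.toEOGraph.graph.edgeSet ∧ y ∈ f) ∧
      (∀ f ∈ S, ∀ f' ∈ S', G.toEOGraph.label f < G.toEOGraph.label f') ∧
      (∀ f' ∈ S', G.toEOGraph.label f' < G.toEOGraph.label e)

/-- An edge `e` (with left end `x` and right end `y`) is `c`-right-leaning. -/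
def RightLeaning {V : Type} [Fintype V] (c : ℕ) (G : EOBigraph V) (e : Sym2 V) : Prop :=
  ∃ x y : V, e = s(x, y) ∧ e ∈ G.toEOGraph.graph.edgeSet ∧
    G.side x = false ∧ G.side y = true ∧
    ∃ S S' : Finset (Sym2 V), S.card = c ∧ S'.card = c ∧
      (∀ f ∈ S, f ∈ G.toEOGraph.graph.edgeSet ∧ x ∈ f) ∧
      (∀ f ∈ S', f ∈ G.toEOGraph.graph.edgeSet ∧ y ∈ f) ∧
      (∀ f' ∈ S', ∀ f ∈ S, G.toEOGraph.label f' < G.toEOGraph.label f) ∧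
      (∀ f ∈ S, G.toEOGraph.label f < G.toEOGraph.label e)

/-- The spanning sub-bigraph of `G` consisting of the edges satisfying `P`. -/
def bigraphRestrict {V : Type} [Fintype V] (G : EOBigraph V) (P : Sym2 V → Prop) :
    EOBigraph V where
  toEOGraph :=
    { graph := SimpleGraph.fromEdgeSet {e | e ∈ G.toEOGraph.graph.edgeSet ∧ P e}
      label := G.toEOGraph.label
      inj := by
        intro e he f hf h
        rw [SimpleGraph.edgeSet_fromEdgeSet] at he hf
        exact G.toEOGraph.inj e he.1.1 f hf.1.1 h }
  side := G.side
  proper := by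
    intro u v huv
    rw [SimpleGraph.fromEdgeSet_adj] at huv
    have h1 : s(u, v) ∈ G.toEOGraph.graph.edgeSet := huv.1.1
    exact G.proper u v ((SimpleGraph.mem_edgeSet _).mp h1)

/-- The spanning subgraph of the `c`-left-leaning edges. -/
def leftSub {V : Type} [Fintype V] (c : ℕ) (G : EOBigraph V) : EOBigraph V :=
  bigraphRestrict G (LeftLeaning c G)

/-- The spanning subgraph of the `c`-right-leaning edges. -/
def rightSub {V : Type} [Fintype V] (c : ℕ) (G : EOBigraph V) : EOBigraph V :=
  bigraphRestrict G (RightLeaning c G)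

/-- `G^{c-left}_i`: iteratively keep only `c`-left-leaning edges, `i` times. -/
def leftIter {V : Type} [Fintype V] (c i : ℕ) (G : EOBigraph V) : EOBigraph V :=
  (leftSub c)^[i] G

/-- `G^{c-right}_i`: iteratively keep only `c`-right-leaning edges, `i` times. -/
def rightIter {V : Type} [Fintype V] (c i : ℕ) (G : EOBigraph V) : EOBigraph V :=
  (rightSub c)^[i] G

/-- The set of labels of edges incident to `v`. -/
def incidentLabels {V : Type} [Fintype V] (G : EOGraph V) (v : V) : Set ℝ :=
  G.label '' {e | e ∈ G.graph.edgeSet ∧ v ∈ e}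

/-- The vertex label `l(v)`: the second smallest label among the edges incident to `v`
(meaningful when `v` has degree at least 2). -/
noncomputable def secondLabel {V : Type} [Fintype V] (G : EOGraph V) (v : V) : ℝ :=
  sInf (incidentLabels G v \ {sInf (incidentLabels G v)})

/-- `v` has degree at least 2. -/
def DegTwo {V : Type} [Fintype V] (G : EOGraph V) (v : V) : Prop :=
  2 ≤ {e | e ∈ G.graph.edgeSet ∧ v ∈ e}.ncard

/-- An edge `xy` (left end `x`, right end `y`) is left inclined if `l(x) < l(y) ≤ L(xy)`. -/
def LeftInclined {V : Type} [Fintype V] (G : EOBigraph V) (e : Sym2 V) : Prop :=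
  ∃ x y : V, e = s(x, y) ∧ e ∈ G.toEOGraph.graph.edgeSet ∧
    G.side x = false ∧ G.side y = true ∧
    DegTwo G.toEOGraph x ∧ DegTwo G.toEOGraph y ∧
    secondLabel G.toEOGraph x < secondLabel G.toEOGraph y ∧
    secondLabel G.toEOGraph y ≤ G.toEOGraph.label e

/-- An edge `xy` (left end `x`, right end `y`) is right inclined if `l(y) < l(x) ≤ L(xy)`. -/
def RightInclined {V : Type} [Fintype V] (G : EOBigraph V) (e : Sym2 V) : Prop :=
  ∃ x y : V, e = s(x, y) ∧ e ∈ G.toEOGraph.graph.edgeSet ∧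
    G.side x = false ∧ G.side y = true ∧
    DegTwo G.toEOGraph x ∧ DegTwo G.toEOGraph y ∧
    secondLabel G.toEOGraph y < secondLabel G.toEOGraph x ∧
    secondLabel G.toEOGraph x ≤ G.toEOGraph.label e

/-- `G_l`: the spanning sub-bigraph of the left inclined edges of `G`. -/
def inclinedLeftSub {V : Type} [Fintype V] (G : EOBigraph V) : EOBigraph V :=
  bigraphRestrict G (LeftInclined G)

/-- `G_r`: the spanning sub-bigraph of the right inclined edges of `G`. -/
def inclinedRightSub {V : Type} [Fintype V] (G : EOBigraph V) : EOBigraph V :=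
  bigraphRestrict G (RightInclined G)

/-- The underlying simple graph of `P` is a path. -/
def IsPathEO {V : Type} [Fintype V] (P : EOGraph V) : Prop :=
  ∃ (k : ℕ) (f : V ≃ Fin k), ∀ a b, P.graph.Adj a b ↔ (SimpleGraph.pathGraph k).Adj (f a) (f b)

/-- A monotone path: the labels increase (or decrease) monotonically along the path. -/
def IsMonotonePath {V : Type} [Fintype V] (P : EOGraph V) : Prop :=
  ∃ (k : ℕ) (w : Fin k → ℝ) (hw : Function.Injective w),
    (StrictMono w ∨ StrictAnti w) ∧ EOIsoTo (pathEO k w hw) P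

/-- A flipped path: obtained from a monotone path (with at least 3 edges) by swapping
either the two smallest or the two largest labels. -/
def IsFlippedPath {V : Type} [Fintype V] (P : EOGraph V) : Prop :=
  ∃ (k : ℕ) (hk : 4 ≤ k) (w : Fin k → ℝ) (hw : StrictMono w),
    EOIsoTo (pathEO k (w ∘ (Equiv.swap (⟨0, by omega⟩ : Fin k) ⟨1, by omega⟩))
      (hw.injective.comp (Equiv.injective _))) P ∨
    EOIsoTo (pathEO k (w ∘ (Equiv.swap (⟨k-3, by omega⟩ : Fin k) ⟨k-2, by omega⟩))
      (hw.injective.comp (Equiv.injective _))) P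

/-- 0-1 matrix containment: `A` contains `B` if `B` can be obtained from a submatrix of `A`
by possibly changing some 1 entries to 0. -/
def MContains {m n p q : ℕ} (A : Fin m → Fin n → Bool) (B : Fin p → Fin q → Bool) : Prop :=
  ∃ (r : Fin p → Fin m) (c : Fin q → Fin n), StrictMono r ∧ StrictMono c ∧
    ∀ i j, B i j = true → A (r i) (c j) = true

/-- The extremal function of a 0-1 matrix `B`: the maximum number of 1 entries in an
`n × n` 0-1 matrix avoiding `B`. -/
noncomputable def mex {p q : ℕ} (n : ℕ) (B : Fin p → Fin q → Bool) : ℕ :=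
  sSup {k | ∃ A : Fin n → Fin n → Bool, ¬ MContains A B ∧
    k = (Finset.univ.filter fun ij : Fin n × Fin n => A ij.1 ij.2 = true).card}

/-- The staircase with positions `p 0, …, p t` describes the matrix `A`. -/
def DescribedBy {nr nc : ℕ} (A : Fin nr → Fin nc → Bool) (t : ℕ)
    (p : Fin (t + 1) → Fin nr × Fin nc) : Prop :=
  (∀ k : Fin t,
      ((p k.succ).1.val = (p k.castSucc).1.val + 1 ∧ (p k.succ).2 = (p k.castSucc).2) ∨
      ((p k.succ).1 = (p k.castSucc).1 ∧ (p k.succ).2.val = (p k.castSucc).2.val + 1)) ∧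
  ∀ i j, A i j = true ↔
    ((∃ k, p k = (i, j)) ∨
     (i = (p 0).1 ∧ j < (p 0).2) ∨ (j = (p 0).2 ∧ i < (p 0).1) ∨
     (i = (p (Fin.last t)).1 ∧ (p (Fin.last t)).2 < j) ∨
     (j = (p (Fin.last t)).2 ∧ (p (Fin.last t)).1 < i))

/-- A staircase matrix: `A`, or `A` with the order of its columns reversed, is described
by a staircase. -/
def IsStaircaseMatrix {nr nc : ℕ} (A : Fin nr → Fin nc → Bool) : Prop :=
  (∃ t p, DescribedBy A t p) ∨ (∃ t p, DescribedBy (fun i j => A i j.rev) t p)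

/-- The bipartite graph whose bipartite adjacency matrix is `A`. -/
def MatrixGraph {nr nc : ℕ} (A : Fin nr → Fin nc → Bool) : SimpleGraph (Fin nr ⊕ Fin nc) :=
  SimpleGraph.fromRel fun u v =>
    match u, v with
    | .inl i, .inr j => A i j = true
    | _, _ => False

/-- A connected 0-1 matrix: the bipartite adjacency matrix of a connected graph. -/
def IsConnectedMatrix {nr nc : ℕ} (A : Fin nr → Fin nc → Bool) : Prop :=
  (MatrixGraph A).Connected

-- plumbing
def mones {n : ℕ} (M : Fin n → Fin n → Bool) : ℕ :=
  (Finset.univ.filter fun ij : Fin n × Fin n => M ij.1 ij.2 = true).card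

lemma mex_le_of_forall {p q n m : ℕ} {B : Fin p → Fin q → Bool}
    (h : ∀ M : Fin n → Fin n → Bool, ¬ MContains M B → mones M ≤ m) :
    mex n B ≤ m := by
  rw [mex]
  rcases Set.eq_empty_or_nonempty {k | ∃ A : Fin n → Fin n → Bool, ¬ MContains A B ∧
    k = (Finset.univ.filter fun ij : Fin n × Fin n => A ij.1 ij.2 = true).card} with he | hne
  · rw [he, csSup_empty]; exact Nat.zero_le m
  · apply csSup_le hne
    rintro k ⟨M, hM, rfl⟩
    exact h M hM

lemma avoid_le_mex {p q n : ℕ} {B : Fin p → Fin q → Bool} {M : Fin n → Fin n → Bool}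
    (h : ¬ MContains M B) : mones M ≤ mex n B := by
  apply le_csSup
  · refine ⟨n * n, ?_⟩
    rintro k ⟨M', _, rfl⟩
    calc (Finset.univ.filter fun ij : Fin n × Fin n => M' ij.1 ij.2 = true).card
        ≤ (Finset.univ : Finset (Fin n × Fin n)).card := Finset.card_filter_le _ _
      _ = n * n := by simp
  · exact ⟨M, h, rfl⟩

lemma step_lemma {n p q : ℕ} {B B' : Fin p → Fin q → Bool} {d : ℕ}
    (h : ∀ M : Fin n → Fin n → Bool, ¬ MContains M B' →
      ∃ M'' : Fin n → Fin n → Bool, ¬ MContains M'' B ∧ mones M ≤ mones M'' + d) :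
    mex n B' ≤ mex n B + d := by
  apply mex_le_of_forall
  intro M hM
  obtain ⟨M'', hM'', hle⟩ := h M hM
  exact hle.trans (Nat.add_le_add_right (avoid_le_mex hM'') d)

def revc {p q : ℕ} (B : Fin p → Fin q → Bool) : Fin p → Fin q → Bool :=
  fun i j => B i j.rev

def trm {p q : ℕ} (B : Fin p → Fin q → Bool) : Fin q → Fin p → Bool :=
  fun j i => B i j

lemma revc_revc {p q : ℕ} (B : Fin p → Fin q → Bool) : revc (revc B) = B := by
  funext i j; simp [revc, Fin.rev_rev]

lemma mcontains_revc {m n p q : ℕ} {A : Fin m → Fin n → Bool} {B : Fin p → Fin q → Bool}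
    (h : MContains A B) : MContains (revc A) (revc B) := by
  obtain ⟨r, c, hr, hc, hmap⟩ := h
  refine ⟨r, fun j => (c j.rev).rev, hr, ?_, ?_⟩
  · intro a b hab
    exact Fin.rev_lt_rev.mpr (hc (Fin.rev_lt_rev.mpr hab))
  · intro i j hij
    simpa [revc, Fin.rev_rev] using hmap i j.rev hij

lemma mcontains_trm {m n p q : ℕ} {A : Fin m → Fin n → Bool} {B : Fin p → Fin q → Bool}
    (h : MContains A B) : MContains (trm A) (trm B) := by
  obtain ⟨r, c, hr, hc, hmap⟩ := h
  exact ⟨c, r, hc, hr, fun j i hij => hmap i j hij⟩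

lemma mones_revc {n : ℕ} (M : Fin n → Fin n → Bool) : mones (revc M) = mones M := by
  rw [mones, mones]
  apply Finset.card_bij (fun ij _ => (ij.1, ij.2.rev))
  · rintro ⟨a, b⟩ h
    simp only [Finset.mem_filter, Finset.mem_univ, true_and] at h ⊢; simp only [revc] at h ⊢
    exact h
  · rintro ⟨a, b⟩ h ⟨a', b'⟩ h' hh
    simp only [Prod.mk.injEq] at hh
    obtain ⟨h1, h2⟩ := hh
    exact Prod.ext h1 (Fin.rev_injective h2)
  · rintro ⟨a, b⟩ h
    refine ⟨(a, b.rev), ?_, by simp [Fin.rev_rev]⟩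
    simp only [Finset.mem_filter, Finset.mem_univ, true_and] at h ⊢; simp only [revc, Fin.rev_rev] at h ⊢
    exact h

lemma mones_trm {n : ℕ} (M : Fin n → Fin n → Bool) : mones (trm M) = mones M := by
  rw [mones, mones]
  apply Finset.card_bij (fun ij _ => (ij.2, ij.1))
  · rintro ⟨a, b⟩ h
    simp only [Finset.mem_filter, Finset.mem_univ, true_and] at h ⊢; simpa [trm] using h
  · rintro ⟨a, b⟩ h ⟨a', b'⟩ h' hh
    simp only [Prod.mk.injEq] at hh
    exact Prod.ext hh.2 hh.1
  · rintro ⟨a, b⟩ h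
    exact ⟨(b, a), by simp only [Finset.mem_filter, Finset.mem_univ, true_and] at h ⊢; simpa [trm] using h, rfl⟩

lemma mex_revc {p q n : ℕ} (B : Fin p → Fin q → Bool) : mex n (revc B) = mex n B := by
  rw [mex, mex]
  congr 1
  ext k
  constructor
  · rintro ⟨M, hM, rfl⟩
    refine ⟨revc M, ?_, (mones_revc M).symm⟩
    intro hc
    apply hM
    have := mcontains_revc hc
    rwa [revc_revc] at this
  · rintro ⟨M, hM, rfl⟩
    refine ⟨revc M, ?_, (mones_revc M).symm⟩
    intro hc
    apply hM
    have := mcontains_revc hc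
    rwa [revc_revc, revc_revc] at this

lemma mex_trm {p q n : ℕ} (B : Fin p → Fin q → Bool) : mex n (trm B) = mex n B := by
  rw [mex, mex]
  congr 1
  ext k
  constructor
  · rintro ⟨M, hM, rfl⟩
    refine ⟨trm M, ?_, (mones_trm M).symm⟩
    intro hc
    exact hM (mcontains_trm hc)
  · rintro ⟨M, hM, rfl⟩
    refine ⟨trm M, ?_, (mones_trm M).symm⟩
    intro hc
    exact hM (mcontains_trm hc)

open Finset in
lemma hlast_step {n p q : ℕ} (B B' : Fin p → Fin q → Bool) (i0 : Fin p) (j1 j0 : Fin q)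
    (hj : j1 < j0) (hB1 : B i0 j1 = true)
    (hcols : ∀ i j, B i j = true → j ≤ j1)
    (hB' : ∀ i j, B' i j = true ↔ (B i j = true ∨ (i = i0 ∧ j = j0))) :
    mex n B' ≤ mex n B + q * n := by
  classical
  apply step_lemma
  intro M hM
  set tail : Fin n → Fin n → Finset (Fin n) :=
    fun a b => Finset.univ.filter (fun b' => b < b' ∧ M a b' = true) with htail
  refine ⟨fun a b => M a b && decide (q ≤ (tail a b).card), ?_, ?_⟩
  · -- M'' avoids B
    rintro ⟨r, c, hr, hc, hmap⟩
    have hrow : M (r i0) (c j1) = true ∧ q ≤ (tail (r i0) (c j1)).card := by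
      have := hmap i0 j1 hB1
      simpa using this
    set T := tail (r i0) (c j1) with hT
    have hq : q ≤ T.card := hrow.2
    set e := T.orderIsoOfFin (rfl : T.card = T.card) with he
    have hmemT : ∀ x : Fin T.card, c j1 < (e x : Fin n) ∧ M (r i0) (e x : Fin n) = true := by
      intro x
      have h2 : (e x : Fin n) ∈ Finset.univ.filter (fun b' => c j1 < b' ∧ M (r i0) b' = true) :=
        (e x).2
      rw [Finset.mem_filter] at h2
      exact h2.2
    apply hM
    refine ⟨r, fun j => if h : j.val ≤ j1.val then c j
      else (e ⟨j.val - j1.val - 1, by omega⟩ : Fin n), hr, ?_, ?_⟩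
    · intro a b hab
      by_cases ha : a.val ≤ j1.val <;> by_cases hb : b.val ≤ j1.val
      · simpa [ha, hb] using hc hab
      · simp only [ha, hb, dif_pos, dif_neg, not_false_iff]
        calc c a ≤ c j1 := hc.monotone (by exact Fin.le_def.mpr ha)
          _ < _ := (hmemT _).1
      · exact absurd (lt_of_le_of_lt (Fin.le_def.mpr hb) (Fin.lt_def.mpr (by omega : j1.val < a.val))) (not_lt.mpr hab.le)
      · simp only [ha, hb, dif_neg, not_false_iff]
        have : (⟨a.val - j1.val - 1, by omega⟩ : Fin T.card) < ⟨b.val - j1.val - 1, by omega⟩ := by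
          rw [Fin.lt_def]; simp; omega
        exact_mod_cast e.strictMono this
    · intro i j hij
      rcases (hB' i j).mp hij with hB | ⟨hi, hjj⟩
      · have hle : j ≤ j1 := hcols i j hB
        have := hmap i j hB
        simp only [Bool.and_eq_true] at this
        simpa [Fin.le_def.mp hle] using this.1
      · have hlt : ¬ (j.val ≤ j1.val) := by
          have h3 := Fin.lt_def.mp hj
          rw [hjj]; omega
        simp only [dif_neg hlt, hi]
        exact (hmemT _).2
  · -- counting
    have hsub : (Finset.univ.filter fun ij : Fin n × Fin n => M ij.1 ij.2 = true) ⊆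
        (Finset.univ.filter fun ij : Fin n × Fin n =>
          (M ij.1 ij.2 && decide (q ≤ (tail ij.1 ij.2).card)) = true) ∪
        (Finset.univ.filter fun ij : Fin n × Fin n =>
          M ij.1 ij.2 = true ∧ (tail ij.1 ij.2).card < q) := by
      rintro ⟨a, b⟩ h
      simp only [Finset.mem_filter, Finset.mem_univ, true_and] at h
      by_cases hcard : q ≤ (tail a b).card
      · exact Finset.mem_union_left _ (by simp [h, hcard])
      · exact Finset.mem_union_right _ (by simp [h]; omega)
    have hD : (Finset.univ.filter fun ij : Fin n × Fin n =>
          M ij.1 ij.2 = true ∧ (tail ij.1 ij.2).card < q).card ≤ n * q := by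
      rw [Finset.card_eq_sum_card_fiberwise
        (f := fun ij : Fin n × Fin n => ij.1) (t := Finset.univ)
        (fun _ _ => Finset.mem_univ _)]
      have hfib : ∀ a : Fin n,
          ((Finset.univ.filter fun ij : Fin n × Fin n =>
            M ij.1 ij.2 = true ∧ (tail ij.1 ij.2).card < q).filter
              fun ij => ij.1 = a).card ≤ q := by
        intro a
        have hcard : ((Finset.univ.filter fun ij : Fin n × Fin n =>
            M ij.1 ij.2 = true ∧ (tail ij.1 ij.2).card < q).filter
              fun ij => ij.1 = a).card ≤ (Finset.range q).card := by
          apply Finset.card_le_card_of_injOn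
            (fun ij : Fin n × Fin n => (tail ij.1 ij.2).card)
          · rintro ⟨x, b⟩ hb
            simp only [Finset.mem_coe, Finset.mem_filter, Finset.mem_univ, true_and] at hb
            simp only [Finset.mem_coe, Finset.mem_range]
            exact hb.1.2
          · rintro ⟨x, b⟩ hb ⟨x', b'⟩ hb' hbb
            simp only [Finset.mem_coe, Finset.mem_filter, Finset.mem_univ, true_and] at hb hb'
            obtain ⟨⟨hMb, -⟩, hxa⟩ := hb
            obtain ⟨⟨hMb', -⟩, hxa'⟩ := hb'
            simp only at hxa hxa' hMb hMb' hbb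
            have key : ∀ (w u v : Fin n), u < v → M w u = true → M w v = true →
                (tail w v).card < (tail w u).card := by
              intro w u v huv hu hv
              apply Finset.card_lt_card
              constructor
              · intro z hz
                simp only [htail, Finset.mem_filter, Finset.mem_univ, true_and] at hz ⊢
                exact ⟨huv.trans hz.1, hz.2⟩
              · intro hsub2
                have hvmem : v ∈ tail w u := by
                  simp only [htail, Finset.mem_filter, Finset.mem_univ, true_and]
                  exact ⟨huv, hv⟩
                have h5 := hsub2 hvmem
                simp only [htail, Finset.mem_filter, Finset.mem_univ, true_and] at h5
                exact lt_irrefl v h5.1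
            rw [hxa] at hMb hbb
            rw [hxa'] at hMb' hbb
            rcases lt_trichotomy b b' with h | h | h
            · exact absurd hbb (by have := key a b b' h hMb hMb'; omega)
            · exact Prod.ext (hxa.trans hxa'.symm) h
            · exact absurd hbb (by have := key a b' b h hMb' hMb; omega)
        simpa using hcard
      calc ∑ a : Fin n, ((Finset.univ.filter fun ij : Fin n × Fin n =>
            M ij.1 ij.2 = true ∧ (tail ij.1 ij.2).card < q).filter
              fun ij => ij.1 = a).card ≤ ∑ _a : Fin n, q :=
            Finset.sum_le_sum (fun a _ => hfib a)
        _ = n * q := by simp [Finset.sum_const, Finset.card_univ]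
    calc mones M ≤ _ := Finset.card_le_card hsub
      _ ≤ _ + _ := Finset.card_union_le _ _
      _ ≤ mones (fun a b => M a b && decide (q ≤ (tail a b).card)) + n * q := by
          apply Nat.add_le_add_left hD
      _ = _ + q * n := by rw [Nat.mul_comm]

lemma fin_rev_eq_iff {q : ℕ} {a b : Fin q} : a.rev = b ↔ a = b.rev := by
  constructor
  · rintro rfl; rw [Fin.rev_rev]
  · rintro rfl; rw [Fin.rev_rev]

lemma hfirst_step {n p q : ℕ} (B B' : Fin p → Fin q → Bool) (i0 : Fin p) (j1 j0 : Fin q)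
    (hj : j0 < j1) (hB1 : B i0 j1 = true)
    (hcols : ∀ i j, B i j = true → j1 ≤ j)
    (hB' : ∀ i j, B' i j = true ↔ (B i j = true ∨ (i = i0 ∧ j = j0))) :
    mex n B' ≤ mex n B + q * n := by
  have h1 : mex n (revc B') ≤ mex n (revc B) + q * n := by
    apply hlast_step (revc B) (revc B') i0 j1.rev j0.rev (Fin.rev_lt_rev.mpr hj)
    · show B i0 j1.rev.rev = true
      rwa [Fin.rev_rev]
    · intro i j hij
      have h2 := hcols i j.rev hij
      rw [← Fin.rev_le_rev, Fin.rev_rev] at h2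
      exact h2
    · intro i j
      rw [show (revc B' i j = true) ↔ (B' i j.rev = true) from Iff.rfl, hB' i j.rev]
      constructor
      · rintro (h | ⟨h1, h2⟩)
        · exact Or.inl h
        · exact Or.inr ⟨h1, fin_rev_eq_iff.mpr h2.symm |>.symm⟩
      · rintro (h | ⟨h1, h2⟩)
        · exact Or.inl h
        · refine Or.inr ⟨h1, ?_⟩
          rw [h2, Fin.rev_rev]
  rwa [mex_revc, mex_revc] at h1

lemma vlast_step {n p q : ℕ} (B B' : Fin p → Fin q → Bool) (j0 : Fin q) (i1 i0 : Fin p)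
    (hi : i1 < i0) (hB1 : B i1 j0 = true)
    (hrows : ∀ i j, B i j = true → i ≤ i1)
    (hB' : ∀ i j, B' i j = true ↔ (B i j = true ∨ (i = i0 ∧ j = j0))) :
    mex n B' ≤ mex n B + p * n := by
  have h1 : mex n (trm B') ≤ mex n (trm B) + p * n := by
    apply hlast_step (trm B) (trm B') j0 i1 i0 hi hB1
    · intro j i hij
      exact hrows i j hij
    · intro j i
      rw [show (trm B' j i = true) ↔ (B' i j = true) from Iff.rfl, hB' i j]
      constructor
      · rintro (h | ⟨h1, h2⟩)
        · exact Or.inl h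
        · exact Or.inr ⟨h2, h1⟩
      · rintro (h | ⟨h1, h2⟩)
        · exact Or.inl h
        · exact Or.inr ⟨h2, h1⟩
  rwa [mex_trm, mex_trm] at h1

lemma base_bound {n p q : ℕ} (B1 : Fin p → Fin q → Bool) (j0 : Fin q) (hp : 0 < p)
    (hB1 : ∀ i j, B1 i j = true ↔ (i.val = 0 ∧ j.val = j0.val)) :
    mex n B1 ≤ (p + 2 * q) * n := by
  classical
  apply mex_le_of_forall
  intro M hM
  have key : ∀ a b : Fin n, M a b = true →
      n < a.val + p ∨ b.val < j0.val ∨ n + j0.val < b.val + q := by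
    intro a b hab
    by_contra hcon
    push_neg at hcon
    obtain ⟨h1, h2, h3⟩ := hcon
    apply hM
    refine ⟨fun i => ⟨a.val + i.val, by omega⟩,
      fun j => ⟨b.val - j0.val + j.val, by have := j.isLt; have := j0.isLt; omega⟩, ?_, ?_, ?_⟩
    · intro x y hxy
      simp only [Fin.lt_def]
      have := Fin.lt_def.mp hxy; omega
    · intro x y hxy
      simp only [Fin.lt_def]
      have := Fin.lt_def.mp hxy; omega
    · intro i j hij
      rw [hB1] at hij
      obtain ⟨hi, hjv⟩ := hij
      have hval : (⟨a.val + i.val, by omega⟩ : Fin n) = a := by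
        apply Fin.ext; simp [hi]
      have hval2 : (⟨b.val - j0.val + j.val, by have := j.isLt; have := j0.isLt; omega⟩ : Fin n)
          = b := by
        apply Fin.ext; simp [hjv]; omega
      show M ⟨a.val + i.val, _⟩ ⟨b.val - j0.val + j.val, _⟩ = true
      rw [hval, hval2]
      exact hab
  -- counting
  have hsub : (Finset.univ.filter fun ij : Fin n × Fin n => M ij.1 ij.2 = true) ⊆
      ((Finset.univ.filter fun a : Fin n => n < a.val + p) ×ˢ Finset.univ) ∪
      (Finset.univ ×ˢ (Finset.univ.filter fun b : Fin n =>
        b.val < j0.val ∨ n + j0.val < b.val + q)) := by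
    rintro ⟨a, b⟩ h
    simp only [Finset.mem_filter, Finset.mem_univ, true_and] at h
    rcases key a b h with hk | hk | hk
    · exact Finset.mem_union_left _ (by simp [hk])
    · exact Finset.mem_union_right _ (by simp [hk])
    · exact Finset.mem_union_right _ (by simp [hk])
  have hA : (Finset.univ.filter fun a : Fin n => n < a.val + p).card ≤ p := by
    have : (Finset.univ.filter fun a : Fin n => n < a.val + p).card ≤ (Finset.range p).card := by
      apply Finset.card_le_card_of_injOn (fun a : Fin n => a.val - (n - p))
      · intro a ha
        simp only [Finset.mem_coe, Finset.mem_filter, Finset.mem_univ, true_and] at ha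
        simp only [Finset.mem_coe, Finset.mem_range]
        have := a.isLt; omega
      · intro a ha a' ha' haa
        simp only [Finset.mem_coe, Finset.mem_filter, Finset.mem_univ, true_and] at ha ha'
        simp only at haa
        apply Fin.ext
        have := a.isLt; have := a'.isLt; omega
    simpa using this
  have hBc : (Finset.univ.filter fun b : Fin n =>
      b.val < j0.val ∨ n + j0.val < b.val + q).card ≤ 2 * q := by
    have hsub2 : (Finset.univ.filter fun b : Fin n =>
        b.val < j0.val ∨ n + j0.val < b.val + q) ⊆
        (Finset.univ.filter fun b : Fin n => b.val < j0.val) ∪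
        (Finset.univ.filter fun b : Fin n => n + j0.val < b.val + q) := by
      intro b hb
      simp only [Finset.mem_filter, Finset.mem_univ, true_and] at hb
      rcases hb with h | h
      · exact Finset.mem_union_left _ (by simp [h])
      · exact Finset.mem_union_right _ (by simp [h])
    have h1 : (Finset.univ.filter fun b : Fin n => b.val < j0.val).card ≤ q := by
      have : (Finset.univ.filter fun b : Fin n => b.val < j0.val).card ≤
          (Finset.range q).card := by
        apply Finset.card_le_card_of_injOn (fun b : Fin n => b.val)
        · intro b hb
          simp only [Finset.mem_coe, Finset.mem_filter, Finset.mem_univ, true_and] at hb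
          simp only [Finset.mem_coe, Finset.mem_range]
          have := j0.isLt; omega
        · intro b _ b' _ hbb
          exact Fin.ext hbb
      simpa using this
    have h2 : (Finset.univ.filter fun b : Fin n => n + j0.val < b.val + q).card ≤ q := by
      have : (Finset.univ.filter fun b : Fin n => n + j0.val < b.val + q).card ≤
          (Finset.range q).card := by
        apply Finset.card_le_card_of_injOn (fun b : Fin n => b.val - (n + j0.val + 1 - q))
        · intro b hb
          simp only [Finset.mem_coe, Finset.mem_filter, Finset.mem_univ, true_and] at hb
          simp only [Finset.mem_coe, Finset.mem_range]
          have := b.isLt; omega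
        · intro b hb b' hb' hbb
          simp only [Finset.mem_coe, Finset.mem_filter, Finset.mem_univ, true_and] at hb hb'
          simp only at hbb
          apply Fin.ext
          omega
      simpa using this
    calc _ ≤ _ := Finset.card_le_card hsub2
      _ ≤ _ + _ := Finset.card_union_le _ _
      _ ≤ q + q := Nat.add_le_add h1 h2
      _ = 2 * q := by omega
  calc mones M ≤ _ := Finset.card_le_card hsub
    _ ≤ _ + _ := Finset.card_union_le _ _
    _ ≤ p * n + n * (2 * q) := by
        apply Nat.add_le_add
        · rw [Finset.card_product]
          exact Nat.mul_le_mul hA (by simp)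
        · rw [Finset.card_product]
          exact Nat.mul_le_mul (by simp) hBc
    _ ≤ (p + 2 * q) * n := by ring_nf; omega

section Staircase

variable {nr nc t : ℕ} (p : Fin (t + 1) → Fin nr × Fin nc)

def pstep (p : Fin (t + 1) → Fin nr × Fin nc) : Prop :=
  ∀ m : ℕ, ∀ hm : m < t,
    (((p ⟨m+1, by omega⟩).1.val = (p ⟨m, by omega⟩).1.val + 1 ∧
      (p ⟨m+1, by omega⟩).2.val = (p ⟨m, by omega⟩).2.val) ∨
     ((p ⟨m+1, by omega⟩).1.val = (p ⟨m, by omega⟩).1.val ∧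
      (p ⟨m+1, by omega⟩).2.val = (p ⟨m, by omega⟩).2.val + 1))

lemma pstep_of_describedBy {A : Fin nr → Fin nc → Bool} (h : DescribedBy A t p) : pstep p := by
  intro m hm
  have := h.1 ⟨m, hm⟩
  rcases this with ⟨h1, h2⟩ | ⟨h1, h2⟩
  · left
    constructor
    · exact h1
    · exact congrArg Fin.val h2
  · right
    constructor
    · exact congrArg Fin.val h1
    · exact h2

lemma pcoord_sum (hp : pstep p) : ∀ m : ℕ, ∀ hm : m < t + 1,
    (p ⟨m, hm⟩).1.val + (p ⟨m, hm⟩).2.val = (p 0).1.val + (p 0).2.val + m := by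
  intro m
  induction m with
  | zero => intro hm; rfl
  | succ k ih =>
    intro hm
    have hk : k < t + 1 := by omega
    have := ih hk
    rcases hp k (by omega) with ⟨h1, h2⟩ | ⟨h1, h2⟩ <;> omega

lemma pmono (hp : pstep p) : ∀ k m : ℕ, ∀ hk : k < t + 1, ∀ hm : m < t + 1, k ≤ m →
    (p ⟨k, hk⟩).1.val ≤ (p ⟨m, hm⟩).1.val ∧
    (p ⟨k, hk⟩).2.val ≤ (p ⟨m, hm⟩).2.val := by
  intro k m hk
  induction m with
  | zero =>
    intro hm hkm
    have : k = 0 := by omega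
    subst this
    exact ⟨le_refl _, le_refl _⟩
  | succ l ih =>
    intro hm hkm
    rcases Nat.eq_or_lt_of_le hkm with heq | hlt
    · subst heq
      exact ⟨le_refl _, le_refl _⟩
    · have hkl : k ≤ l := by omega
      have hl : l < t + 1 := by omega
      have := ih hl hkl
      rcases hp l (by omega) with ⟨h1, h2⟩ | ⟨h1, h2⟩ <;> exact ⟨by omega, by omega⟩

end Staircase

section Phases

variable {nr nc t : ℕ}

def SQ1 (nr nc b0 m : ℕ) : Fin nr → Fin nc → Bool :=
  fun i j => decide (j.val = b0 ∧ i.val ≤ m)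

def SQ2 (nr nc a0 b0 m : ℕ) : Fin nr → Fin nc → Bool :=
  fun i j => decide ((j.val = b0 ∧ i.val ≤ a0) ∨ (i.val = a0 ∧ b0 ≤ j.val + m ∧ j.val < b0))

def SQ3 (p : Fin (t + 1) → Fin nr × Fin nc) (m : ℕ) : Fin nr → Fin nc → Bool :=
  fun i j => decide ((j.val = (p 0).2.val ∧ i.val ≤ (p 0).1.val) ∨
    (i.val = (p 0).1.val ∧ j.val < (p 0).2.val) ∨
    (∃ k : Fin (t+1), k.val ≤ m ∧ p k = (i, j)))

def SQ4 (p : Fin (t + 1) → Fin nr × Fin nc) (m : ℕ) : Fin nr → Fin nc → Bool :=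
  fun i j => decide ((j.val = (p 0).2.val ∧ i.val ≤ (p 0).1.val) ∨
    (i.val = (p 0).1.val ∧ j.val < (p 0).2.val) ∨
    (∃ k : Fin (t+1), p k = (i, j)) ∨
    (i.val = (p (Fin.last t)).1.val ∧ (p (Fin.last t)).2.val < j.val ∧
      j.val ≤ (p (Fin.last t)).2.val + m))

def SQ5 (p : Fin (t + 1) → Fin nr × Fin nc) (m : ℕ) : Fin nr → Fin nc → Bool :=
  fun i j => decide ((j.val = (p 0).2.val ∧ i.val ≤ (p 0).1.val) ∨
    (i.val = (p 0).1.val ∧ j.val < (p 0).2.val) ∨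
    (∃ k : Fin (t+1), p k = (i, j)) ∨
    (i.val = (p (Fin.last t)).1.val ∧ (p (Fin.last t)).2.val < j.val) ∨
    (j.val = (p (Fin.last t)).2.val ∧ (p (Fin.last t)).1.val < i.val ∧
      i.val ≤ (p (Fin.last t)).1.val + m))

lemma phase_chain {pp qq : ℕ} (n : ℕ) (Q : ℕ → Fin pp → Fin qq → Bool) (len cost : ℕ)
    (h : ∀ m, m < len → mex n (Q (m+1)) ≤ mex n (Q m) + cost) :
    mex n (Q len) ≤ mex n (Q 0) + len * cost := by
  induction len with
  | zero => simp
  | succ l ih =>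
    have h1 := h l (by omega)
    have h2 := ih (fun m hm => h m (by omega))
    calc mex n (Q (l+1)) ≤ mex n (Q l) + cost := h1
      _ ≤ mex n (Q 0) + l * cost + cost := by omega
      _ = mex n (Q 0) + (l+1) * cost := by ring

lemma phase1 (n : ℕ) (j0 : Fin nc) (cap : ℕ) (hcap : cap < nr) :
    mex n (SQ1 nr nc j0.val cap) ≤ mex n (SQ1 nr nc j0.val 0) + cap * (nr * n) := by
  apply phase_chain n (fun m => SQ1 nr nc j0.val m) cap (nr * n)
  intro m hm
  apply vlast_step _ _ j0 ⟨m, by omega⟩ ⟨m+1, by omega⟩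
  · exact Fin.lt_def.mpr (by simp)
  · simp [SQ1]
  · intro i j hij
    simp only [SQ1, decide_eq_true_eq] at hij
    exact Fin.le_def.mpr (show i.val ≤ m by omega)
  · intro i j
    simp only [SQ1, decide_eq_true_eq, Fin.ext_iff]
    omega

lemma phase2 (n : ℕ) (x0 : Fin nr) (j0 : Fin nc) :
    mex n (SQ2 nr nc x0.val j0.val j0.val) ≤
      mex n (SQ2 nr nc x0.val j0.val 0) + j0.val * (nc * n) := by
  apply phase_chain n (fun m => SQ2 nr nc x0.val j0.val m) j0.val (nc * n)
  intro m hm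
  have hj0 := j0.isLt
  apply hfirst_step _ _ x0 ⟨j0.val - m, by omega⟩ ⟨j0.val - m - 1, by omega⟩
  · exact Fin.lt_def.mpr (show j0.val - m - 1 < j0.val - m by omega)
  · show decide ((((⟨j0.val - m, by omega⟩ : Fin nc)).val = j0.val ∧ x0.val ≤ x0.val) ∨
      (x0.val = x0.val ∧ j0.val ≤ (⟨j0.val - m, by omega⟩ : Fin nc).val + m ∧
        (⟨j0.val - m, by omega⟩ : Fin nc).val < j0.val)) = true
    rw [decide_eq_true_eq]
    show (j0.val - m = j0.val ∧ x0.val ≤ x0.val) ∨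
      (x0.val = x0.val ∧ j0.val ≤ j0.val - m + m ∧ j0.val - m < j0.val)
    omega
  · intro i j hij
    simp only [SQ2, decide_eq_true_eq] at hij
    exact Fin.le_def.mpr (show j0.val - m ≤ j.val by omega)
  · intro i j
    simp only [SQ2, decide_eq_true_eq, Fin.ext_iff]
    omega

lemma phase3 (p : Fin (t + 1) → Fin nr × Fin nc) (hp : pstep p) (n : ℕ) :
    mex n (SQ3 p t) ≤ mex n (SQ3 p 0) + t * ((nr + nc) * n) := by
  apply phase_chain n (fun m => SQ3 p m) t ((nr + nc) * n)
  intro m hm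
  have hm1 : m < t + 1 := by omega
  have hm2 : m + 1 < t + 1 := by omega
  have hB' : ∀ i j, SQ3 p (m+1) i j = true ↔
      (SQ3 p m i j = true ∨ (i = (p ⟨m+1, hm2⟩).1 ∧ j = (p ⟨m+1, hm2⟩).2)) := by
    intro i j
    simp only [SQ3, decide_eq_true_eq]
    constructor
    · rintro (h | h | ⟨k, hk, hpk⟩)
      · exact Or.inl (Or.inl h)
      · exact Or.inl (Or.inr (Or.inl h))
      · rcases Nat.lt_or_ge k.val (m+1) with hlt | hge
        · exact Or.inl (Or.inr (Or.inr ⟨k, by omega, hpk⟩))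
        · have hkeq : k = ⟨m+1, hm2⟩ := Fin.ext (show k.val = m + 1 by omega)
          subst hkeq
          rw [hpk]
          exact Or.inr ⟨rfl, rfl⟩
    · rintro ((h | h | ⟨k, hk, hpk⟩) | ⟨hi, hj⟩)
      · exact Or.inl h
      · exact Or.inr (Or.inl h)
      · exact Or.inr (Or.inr ⟨k, by omega, hpk⟩)
      · exact Or.inr (Or.inr ⟨⟨m+1, hm2⟩, le_refl _, by rw [hi, hj]⟩)
  have hB1 : SQ3 p m (p ⟨m, hm1⟩).1 (p ⟨m, hm1⟩).2 = true := by
    simp only [SQ3, decide_eq_true_eq]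
    exact Or.inr (Or.inr ⟨⟨m, hm1⟩, le_refl _, rfl⟩)
  have hmono : ∀ k : Fin (t+1), k.val ≤ m →
      (p k).1.val ≤ (p ⟨m, hm1⟩).1.val ∧ (p k).2.val ≤ (p ⟨m, hm1⟩).2.val := by
    intro k hk
    have := pmono p hp k.val m k.isLt hm1 hk
    have hkk : (⟨k.val, k.isLt⟩ : Fin (t+1)) = k := Fin.ext rfl
    rwa [hkk] at this
  have hmono0 : (p 0).1.val ≤ (p ⟨m, hm1⟩).1.val ∧ (p 0).2.val ≤ (p ⟨m, hm1⟩).2.val := by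
    have := pmono p hp 0 m (by omega) hm1 (by omega)
    have hkk : (⟨0, by omega⟩ : Fin (t+1)) = 0 := Fin.ext rfl
    rwa [hkk] at this
  rcases hp m hm with ⟨h1, h2⟩ | ⟨h1, h2⟩
  · -- vertical step
    have step := vlast_step (SQ3 p m) (SQ3 p (m+1)) (p ⟨m+1, hm2⟩).2
      (p ⟨m, hm1⟩).1 (p ⟨m+1, hm2⟩).1 (Fin.lt_def.mpr (by omega)) ?_ ?_ hB' (n := n)
    · calc mex n (SQ3 p (m+1)) ≤ mex n (SQ3 p m) + nr * n := step
        _ ≤ mex n (SQ3 p m) + (nr + nc) * n := by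
            apply Nat.add_le_add_left
            apply Nat.mul_le_mul_right
            omega
    · -- hB1 : SQ3 p m (p ⟨m⟩).1 (p ⟨m+1⟩).2 = true
      have hsnd : (p ⟨m+1, hm2⟩).2 = (p ⟨m, hm1⟩).2 := Fin.ext h2
      rw [hsnd]
      exact hB1
    · intro i j hij
      simp only [SQ3, decide_eq_true_eq] at hij
      apply Fin.le_def.mpr
      rcases hij with h | h | ⟨k, hk, hpk⟩
      · omega
      · omega
      · have := (hmono k hk).1
        rw [hpk] at this
        exact this
  · -- horizontal step
    have step := hlast_step (SQ3 p m) (SQ3 p (m+1)) (p ⟨m+1, hm2⟩).1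
      (p ⟨m, hm1⟩).2 (p ⟨m+1, hm2⟩).2 (Fin.lt_def.mpr (by omega)) ?_ ?_ hB' (n := n)
    · calc mex n (SQ3 p (m+1)) ≤ mex n (SQ3 p m) + nc * n := step
        _ ≤ mex n (SQ3 p m) + (nr + nc) * n := by
            apply Nat.add_le_add_left
            apply Nat.mul_le_mul_right
            omega
    · have hfst : (p ⟨m+1, hm2⟩).1 = (p ⟨m, hm1⟩).1 := Fin.ext h1
      rw [hfst]
      exact hB1
    · intro i j hij
      simp only [SQ3, decide_eq_true_eq] at hij
      apply Fin.le_def.mpr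
      rcases hij with h | h | ⟨k, hk, hpk⟩
      · omega
      · omega
      · have := (hmono k hk).2
        rw [hpk] at this
        exact this

end Phases

section Phases2

variable {nr nc t : ℕ}

lemma phase4 (p : Fin (t + 1) → Fin nr × Fin nc) (hp : pstep p) (n : ℕ) :
    mex n (SQ4 p (nc - 1 - (p (Fin.last t)).2.val)) ≤
      mex n (SQ4 p 0) + (nc - 1 - (p (Fin.last t)).2.val) * (nc * n) := by
  apply phase_chain n (fun m => SQ4 p m) _ (nc * n)
  intro m hm
  have hb1lt := (p (Fin.last t)).2.isLt
  have hmono : ∀ k : Fin (t+1),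
      (p k).1.val ≤ (p (Fin.last t)).1.val ∧ (p k).2.val ≤ (p (Fin.last t)).2.val := by
    intro k
    have := pmono p hp k.val t k.isLt (by omega) (by omega)
    have hkk : (⟨k.val, k.isLt⟩ : Fin (t+1)) = k := Fin.ext rfl
    have hlast : (⟨t, by omega⟩ : Fin (t+1)) = Fin.last t := Fin.ext rfl
    rwa [hkk, hlast] at this
  apply hlast_step _ _ (p (Fin.last t)).1
    ⟨(p (Fin.last t)).2.val + m, by omega⟩ ⟨(p (Fin.last t)).2.val + m + 1, by omega⟩
  · exact Fin.lt_def.mpr (show (p (Fin.last t)).2.val + m < (p (Fin.last t)).2.val + m + 1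
      by omega)
  · -- anchor present
    simp only [SQ4, decide_eq_true_eq]
    rcases Nat.eq_zero_or_pos m with rfl | hm0
    · refine Or.inr (Or.inr (Or.inl ⟨Fin.last t, ?_⟩))
      refine Prod.ext rfl (Fin.ext ?_)
      show (p (Fin.last t)).2.val = (p (Fin.last t)).2.val + 0
      omega
    · refine Or.inr (Or.inr (Or.inr ⟨by trivial, ?_, ?_⟩))
      · show (p (Fin.last t)).2.val < (p (Fin.last t)).2.val + m
        omega
      · show (p (Fin.last t)).2.val + m ≤ (p (Fin.last t)).2.val + m
        omega
  · -- hcols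
    intro i j hij
    simp only [SQ4, decide_eq_true_eq] at hij
    apply Fin.le_def.mpr
    show j.val ≤ (p (Fin.last t)).2.val + m
    have h0 := (hmono 0).2
    rcases hij with h | h | ⟨k, hpk⟩ | h
    · omega
    · omega
    · have := (hmono k).2
      rw [hpk] at this
      exact le_trans this (by omega)
    · omega
  · -- hB'
    intro i j
    simp only [SQ4, decide_eq_true_eq]
    constructor
    · rintro (h | h | h | ⟨hi, hj1, hj2⟩)
      · exact Or.inl (Or.inl h)
      · exact Or.inl (Or.inr (Or.inl h))
      · exact Or.inl (Or.inr (Or.inr (Or.inl h)))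
      · rcases Nat.lt_or_ge j.val ((p (Fin.last t)).2.val + m + 1) with hcase | hcase
        · exact Or.inl (Or.inr (Or.inr (Or.inr ⟨hi, hj1, by omega⟩)))
        · refine Or.inr ⟨Fin.ext hi, Fin.ext ?_⟩
          show j.val = (p (Fin.last t)).2.val + m + 1
          omega
    · rintro ((h | h | h | ⟨hi, hj1, hj2⟩) | ⟨hi, hj⟩)
      · exact Or.inl h
      · exact Or.inr (Or.inl h)
      · exact Or.inr (Or.inr (Or.inl h))
      · exact Or.inr (Or.inr (Or.inr ⟨hi, hj1, by omega⟩))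
      · have hi' : i.val = (p (Fin.last t)).1.val := by rw [hi]
        have hj' : j.val = (p (Fin.last t)).2.val + m + 1 := by rw [hj]
        exact Or.inr (Or.inr (Or.inr ⟨hi', by omega, by omega⟩))

lemma phase5 (p : Fin (t + 1) → Fin nr × Fin nc) (hp : pstep p) (n : ℕ) :
    mex n (SQ5 p (nr - 1 - (p (Fin.last t)).1.val)) ≤
      mex n (SQ5 p 0) + (nr - 1 - (p (Fin.last t)).1.val) * (nr * n) := by
  apply phase_chain n (fun m => SQ5 p m) _ (nr * n)
  intro m hm
  have ha1lt := (p (Fin.last t)).1.isLt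
  have hmono : ∀ k : Fin (t+1),
      (p k).1.val ≤ (p (Fin.last t)).1.val ∧ (p k).2.val ≤ (p (Fin.last t)).2.val := by
    intro k
    have := pmono p hp k.val t k.isLt (by omega) (by omega)
    have hkk : (⟨k.val, k.isLt⟩ : Fin (t+1)) = k := Fin.ext rfl
    have hlast : (⟨t, by omega⟩ : Fin (t+1)) = Fin.last t := Fin.ext rfl
    rwa [hkk, hlast] at this
  apply vlast_step _ _ (p (Fin.last t)).2
    ⟨(p (Fin.last t)).1.val + m, by omega⟩ ⟨(p (Fin.last t)).1.val + m + 1, by omega⟩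
  · exact Fin.lt_def.mpr (show (p (Fin.last t)).1.val + m < (p (Fin.last t)).1.val + m + 1
      by omega)
  · simp only [SQ5, decide_eq_true_eq]
    rcases Nat.eq_zero_or_pos m with rfl | hm0
    · refine Or.inr (Or.inr (Or.inl ⟨Fin.last t, ?_⟩))
      refine Prod.ext (Fin.ext ?_) rfl
      show (p (Fin.last t)).1.val = (p (Fin.last t)).1.val + 0
      omega
    · refine Or.inr (Or.inr (Or.inr (Or.inr ⟨by trivial, ?_, ?_⟩)))
      · show (p (Fin.last t)).1.val < (p (Fin.last t)).1.val + m
        omega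
      · show (p (Fin.last t)).1.val + m ≤ (p (Fin.last t)).1.val + m
        omega
  · intro i j hij
    simp only [SQ5, decide_eq_true_eq] at hij
    apply Fin.le_def.mpr
    show i.val ≤ (p (Fin.last t)).1.val + m
    have h0 := (hmono 0).1
    rcases hij with h | h | ⟨k, hpk⟩ | h | h
    · omega
    · omega
    · have := (hmono k).1
      rw [hpk] at this
      exact le_trans this (by omega)
    · omega
    · omega
  · intro i j
    simp only [SQ5, decide_eq_true_eq]
    constructor
    · rintro (h | h | h | h | ⟨hj, hi1, hi2⟩)
      · exact Or.inl (Or.inl h)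
      · exact Or.inl (Or.inr (Or.inl h))
      · exact Or.inl (Or.inr (Or.inr (Or.inl h)))
      · exact Or.inl (Or.inr (Or.inr (Or.inr (Or.inl h))))
      · rcases Nat.lt_or_ge i.val ((p (Fin.last t)).1.val + m + 1) with hcase | hcase
        · exact Or.inl (Or.inr (Or.inr (Or.inr (Or.inr ⟨hj, hi1, by omega⟩))))
        · refine Or.inr ⟨Fin.ext ?_, Fin.ext hj⟩
          show i.val = (p (Fin.last t)).1.val + m + 1
          omega
    · rintro ((h | h | h | h | ⟨hj, hi1, hi2⟩) | ⟨hi, hj⟩)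
      · exact Or.inl h
      · exact Or.inr (Or.inl h)
      · exact Or.inr (Or.inr (Or.inl h))
      · exact Or.inr (Or.inr (Or.inr (Or.inl h)))
      · exact Or.inr (Or.inr (Or.inr (Or.inr ⟨hj, hi1, by omega⟩)))
      · have hi' : i.val = (p (Fin.last t)).1.val + m + 1 := by rw [hi]
        have hj' : j.val = (p (Fin.last t)).2.val := by rw [hj]
        exact Or.inr (Or.inr (Or.inr (Or.inr ⟨hj', by omega, by omega⟩)))

end Phases2

section Assembly

variable {nr nc t : ℕ}

lemma E1 (a0 b0 : ℕ) : SQ2 nr nc a0 b0 0 = SQ1 nr nc b0 a0 := by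
  funext i j
  simp only [SQ1, SQ2]
  apply decide_eq_decide.mpr
  omega

lemma E2 (p : Fin (t + 1) → Fin nr × Fin nc) :
    SQ3 p 0 = SQ2 nr nc (p 0).1.val (p 0).2.val (p 0).2.val := by
  funext i j
  simp only [SQ2, SQ3]
  apply decide_eq_decide.mpr
  constructor
  · rintro (h | h | ⟨k, hk, hpk⟩)
    · exact Or.inl h
    · exact Or.inr ⟨h.1, by omega, h.2⟩
    · have hk0 : k = 0 := Fin.ext (by simp only [Fin.val_zero]; omega)
      subst hk0
      have hi : (p 0).1 = i := by rw [hpk]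
      have hj : (p 0).2 = j := by rw [hpk]
      exact Or.inl ⟨by rw [← hj], by rw [← hi]⟩
  · rintro (h | ⟨h1, h2, h3⟩)
    · exact Or.inl h
    · exact Or.inr (Or.inl ⟨h1, h3⟩)

lemma E3 (p : Fin (t + 1) → Fin nr × Fin nc) : SQ4 p 0 = SQ3 p t := by
  funext i j
  simp only [SQ3, SQ4]
  apply decide_eq_decide.mpr
  constructor
  · rintro (h | h | ⟨k, hpk⟩ | ⟨h1, h2, h3⟩)
    · exact Or.inl h
    · exact Or.inr (Or.inl h)
    · exact Or.inr (Or.inr ⟨k, by omega, hpk⟩)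
    · omega
  · rintro (h | h | ⟨k, hk, hpk⟩)
    · exact Or.inl h
    · exact Or.inr (Or.inl h)
    · exact Or.inr (Or.inr (Or.inl ⟨k, hpk⟩))

lemma E4 (p : Fin (t + 1) → Fin nr × Fin nc) :
    SQ5 p 0 = SQ4 p (nc - 1 - (p (Fin.last t)).2.val) := by
  funext i j
  have hj := j.isLt
  have hb1 := (p (Fin.last t)).2.isLt
  simp only [SQ4, SQ5]
  apply decide_eq_decide.mpr
  constructor
  · rintro (h | h | ⟨k, hpk⟩ | ⟨h1, h2⟩ | ⟨h1, h2, h3⟩)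
    · exact Or.inl h
    · exact Or.inr (Or.inl h)
    · exact Or.inr (Or.inr (Or.inl ⟨k, hpk⟩))
    · exact Or.inr (Or.inr (Or.inr ⟨h1, h2, by omega⟩))
    · omega
  · rintro (h | h | ⟨k, hpk⟩ | ⟨h1, h2, h3⟩)
    · exact Or.inl h
    · exact Or.inr (Or.inl h)
    · exact Or.inr (Or.inr (Or.inl ⟨k, hpk⟩))
    · exact Or.inr (Or.inr (Or.inr (Or.inl ⟨h1, h2⟩)))

lemma E5 {A : Fin nr → Fin nc → Bool} {p : Fin (t + 1) → Fin nr × Fin nc}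
    (hd : DescribedBy A t p) : A = SQ5 p (nr - 1 - (p (Fin.last t)).1.val) := by
  funext i j
  rw [Bool.eq_iff_iff, hd.2 i j]
  have hilt := i.isLt
  have ha1 := (p (Fin.last t)).1.isLt
  simp only [SQ5, decide_eq_true_eq]
  constructor
  · rintro (⟨k, hpk⟩ | ⟨h1, h2⟩ | ⟨h1, h2⟩ | ⟨h1, h2⟩ | ⟨h1, h2⟩)
    · exact Or.inr (Or.inr (Or.inl ⟨k, hpk⟩))
    · exact Or.inr (Or.inl ⟨congrArg Fin.val h1, Fin.lt_def.mp h2⟩)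
    · exact Or.inl ⟨congrArg Fin.val h1, Nat.le_of_lt (Fin.lt_def.mp h2)⟩
    · exact Or.inr (Or.inr (Or.inr (Or.inl ⟨congrArg Fin.val h1, Fin.lt_def.mp h2⟩)))
    · exact Or.inr (Or.inr (Or.inr (Or.inr
        ⟨congrArg Fin.val h1, Fin.lt_def.mp h2, by omega⟩)))
  · rintro (⟨h1, h2⟩ | ⟨h1, h2⟩ | ⟨k, hpk⟩ | ⟨h1, h2⟩ | ⟨h1, h2, h3⟩)
    · rcases Nat.eq_or_lt_of_le h2 with heq | hlt
      · refine Or.inl ⟨0, ?_⟩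
        refine Prod.ext (Fin.ext ?_) (Fin.ext ?_)
        · show (p 0).1.val = i.val
          omega
        · show (p 0).2.val = j.val
          omega
      · exact Or.inr (Or.inr (Or.inl ⟨Fin.ext h1, Fin.lt_def.mpr hlt⟩))
    · exact Or.inr (Or.inl ⟨Fin.ext h1, Fin.lt_def.mpr h2⟩)
    · exact Or.inl ⟨k, hpk⟩
    · exact Or.inr (Or.inr (Or.inr (Or.inl ⟨Fin.ext h1, Fin.lt_def.mpr h2⟩)))
    · exact Or.inr (Or.inr (Or.inr (Or.inr ⟨Fin.ext h1, Fin.lt_def.mpr h2⟩)))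

end Assembly

lemma staircase_mex_bound {nr nc t : ℕ} (A : Fin nr → Fin nc → Bool)
    (p : Fin (t + 1) → Fin nr × Fin nc) (hd : DescribedBy A t p) (n : ℕ) :
    mex n A ≤ ((nr + 2 * nc) + (nr + nc) * (nr + nc)) * n := by
  have hp := pstep_of_describedBy p hd
  have ha1 := (p (Fin.last t)).1.isLt
  have hb1 := (p (Fin.last t)).2.isLt
  have ha0 := (p 0).1.isLt
  have hb0 := (p 0).2.isLt
  have hbase : mex n (SQ1 nr nc (p 0).2.val 0) ≤ (nr + 2 * nc) * n := by
    apply base_bound _ (p 0).2 (by omega)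
    intro i j
    simp only [SQ1, decide_eq_true_eq]
    omega
  have ha0le : (p 0).1.val ≤ (p (Fin.last t)).1.val ∧
      (p 0).2.val ≤ (p (Fin.last t)).2.val := by
    have := pmono p hp 0 t (by omega) (by omega) (by omega)
    have h0 : (⟨0, by omega⟩ : Fin (t+1)) = 0 := Fin.ext (by simp only [Fin.val_zero])
    have hl : (⟨t, by omega⟩ : Fin (t+1)) = Fin.last t := Fin.ext rfl
    rwa [h0, hl] at this
  have h1 := phase1 (nr := nr) (nc := nc) n (p 0).2 (p 0).1.val (by omega)
  have h2 := phase2 n (p 0).1 (p 0).2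
  have h3 := phase3 p hp n
  have h4 := phase4 p hp n
  have h5 := phase5 p hp n
  have hsum : (p (Fin.last t)).1.val + (p (Fin.last t)).2.val
      = (p 0).1.val + (p 0).2.val + t := by
    have := pcoord_sum p hp t (by omega)
    have hl : (⟨t, by omega⟩ : Fin (t+1)) = Fin.last t := Fin.ext rfl
    rwa [hl] at this
  have e5 : mex n A = mex n (SQ5 p (nr - 1 - (p (Fin.last t)).1.val)) := by rw [← E5 hd]
  have e4 : mex n (SQ5 p 0) = mex n (SQ4 p (nc - 1 - (p (Fin.last t)).2.val)) := by rw [E4]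
  have e3 : mex n (SQ4 p 0) = mex n (SQ3 p t) := by rw [E3]
  have e2 : mex n (SQ3 p 0) =
      mex n (SQ2 nr nc (p 0).1.val (p 0).2.val (p 0).2.val) := by rw [E2]
  have e1 : mex n (SQ2 nr nc (p 0).1.val (p 0).2.val 0) =
      mex n (SQ1 nr nc (p 0).2.val (p 0).1.val) := by rw [E1]
  have hc : nr * n ≤ (nr + nc) * n := Nat.mul_le_mul (by omega) (le_refl n)
  have hc' : nc * n ≤ (nr + nc) * n := Nat.mul_le_mul (by omega) (le_refl n)
  have hb_a : (p 0).1.val * (nr * n) ≤ (p 0).1.val * ((nr + nc) * n) :=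
    Nat.mul_le_mul (le_refl _) hc
  have hb_b : (p 0).2.val * (nc * n) ≤ (p 0).2.val * ((nr + nc) * n) :=
    Nat.mul_le_mul (le_refl _) hc'
  have hb_c : (nc - 1 - (p (Fin.last t)).2.val) * (nc * n) ≤
      (nc - 1 - (p (Fin.last t)).2.val) * ((nr + nc) * n) :=
    Nat.mul_le_mul (le_refl _) hc'
  have hb_d : (nr - 1 - (p (Fin.last t)).1.val) * (nr * n) ≤
      (nr - 1 - (p (Fin.last t)).1.val) * ((nr + nc) * n) :=
    Nat.mul_le_mul (le_refl _) hc
  have hdist : ((p 0).1.val + (p 0).2.val + t + (nc - 1 - (p (Fin.last t)).2.val)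
      + (nr - 1 - (p (Fin.last t)).1.val)) * ((nr + nc) * n)
      = (p 0).1.val * ((nr + nc) * n) + (p 0).2.val * ((nr + nc) * n)
        + t * ((nr + nc) * n) + (nc - 1 - (p (Fin.last t)).2.val) * ((nr + nc) * n)
        + (nr - 1 - (p (Fin.last t)).1.val) * ((nr + nc) * n) := by ring
  have hS : (p 0).1.val + (p 0).2.val + t + (nc - 1 - (p (Fin.last t)).2.val)
      + (nr - 1 - (p (Fin.last t)).1.val) ≤ nr + nc := by omega
  have hprod : ((p 0).1.val + (p 0).2.val + t + (nc - 1 - (p (Fin.last t)).2.val)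
      + (nr - 1 - (p (Fin.last t)).1.val)) * ((nr + nc) * n)
      ≤ (nr + nc) * ((nr + nc) * n) := Nat.mul_le_mul hS (le_refl _)
  have hfinal : ((nr + 2 * nc) + (nr + nc) * (nr + nc)) * n
      = (nr + 2 * nc) * n + (nr + nc) * ((nr + nc) * n) := by ring
  omega


/-- The extremal function of any staircase 0-1 matrix is linear. -/
theorem stmt_18 {nr nc : ℕ} (A : Fin nr → Fin nc → Bool) (hA : IsStaircaseMatrix A) :
    ∃ C : ℝ, 0 < C ∧ ∀ n : ℕ, 0 < n → (mex n A : ℝ) ≤ C * n := by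
  refine ⟨(((nr + 2 * nc) + (nr + nc) * (nr + nc) : ℕ) : ℝ) + 1, by positivity, ?_⟩
  intro n hn
  have hbound : mex n A ≤ ((nr + 2 * nc) + (nr + nc) * (nr + nc)) * n := by
    rcases hA with ⟨t, p, hd⟩ | ⟨t, p, hd⟩
    · exact staircase_mex_bound A p hd n
    · have h := staircase_mex_bound (fun i j => A i j.rev) p hd n
      have hrv : mex n (fun i j => A i j.rev) = mex n A := mex_revc A
      rwa [hrv] at h
  have hcast : (mex n A : ℝ) ≤ ((((nr + 2 * nc) + (nr + nc) * (nr + nc)) * n : ℕ) : ℝ) :=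
    Nat.cast_le.mpr hbound
  push_cast at hcast ⊢
  nlinarith [Nat.cast_nonneg (α := ℝ) n]
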